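/- Let F = F_p be a prime finite field, f : F^n → F a polynomial of total degree at most d, k ∈ ℕ, and z = (z_1, …, z_k) ∈ (F^n)^k. For a ∈ F^k write a·z = Σ_{i=1}^k a_i z_i ∈ F^n and |a| = Σ_{i=1}^k |a_i|, where |·| : F → {0, 1, …, p−1} is the natural map. Let B = {b ∈ F^k : |b| ≤ d}. Then for every a ∈ F^k there exist coefficients λ_{a,b} ∈ F (b ∈ B) such that D_{a·z} f(x) = Σ_{b ∈ B} λ_{a,b} · D_{b·z} f(x) for all x ∈ F^n. -/

import Mathlib

/-- `f : F^n → F` is a polynomial function of total degree at most `d`. -/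
def IsPolyDeg {F : Type} [CommSemiring F] {n : ℕ} (d : ℕ) (f : (Fin n → F) → F) : Prop :=
  ∃ P : MvPolynomial (Fin n) F, P.totalDegree ≤ d ∧ ∀ x, f x = MvPolynomial.eval x P


open MvPolynomial Finset


section Deg
variable {R : Type} [CommRing R] {n : ℕ}

lemma pow_X_add_C (i : Fin n) (a : R) (e : ℕ) :
    ∃ E : MvPolynomial (Fin n) R, (X i + C a) ^ e = X i ^ e + E ∧ E.totalDegree ≤ e - 1 := by
  refine ⟨(X i + C a) ^ e - X i ^ e, by ring, ?_⟩
  rw [add_pow]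
  rw [Finset.sum_range_succ]
  simp only [Nat.sub_self, pow_zero, Nat.choose_self, Nat.cast_one, mul_one, one_mul]
  have : (∑ j ∈ Finset.range e, X i ^ j * C a ^ (e - j) * (e.choose j : MvPolynomial (Fin n) R))
      + X i ^ e - X i ^ e
      = ∑ j ∈ Finset.range e, X i ^ j * C a ^ (e - j) * (e.choose j : MvPolynomial (Fin n) R) := by
    ring
  rw [this]
  refine (totalDegree_finset_sum _ _).trans (Finset.sup_le ?_)
  intro j hj
  have h1 : ((e.choose j : ℕ) : MvPolynomial (Fin n) R) = C ((e.choose j : ℕ) : R) := by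
    simp
  rw [h1]
  calc (X i ^ j * C a ^ (e - j) * C ((e.choose j : ℕ) : R)).totalDegree
      ≤ (X i ^ j * C a ^ (e - j)).totalDegree + (C ((e.choose j : ℕ) : R)).totalDegree :=
        totalDegree_mul _ _
    _ ≤ (X i ^ j).totalDegree + (C a ^ (e - j)).totalDegree + 0 := by
        rw [totalDegree_C]; exact Nat.add_le_add_right (totalDegree_mul _ _) 0
    _ ≤ j + 0 + 0 := by
        have hx : (X i ^ j : MvPolynomial (Fin n) R).totalDegree ≤ j := by
          rw [X_pow_eq_monomial]
          exact (totalDegree_monomial_le _ _).trans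
            (le_of_eq (Finsupp.sum_single_index rfl))
        have hc : ((C a : MvPolynomial (Fin n) R) ^ (e - j)).totalDegree = 0 := by
          have := totalDegree_pow (C a : MvPolynomial (Fin n) R) (e - j)
          rw [totalDegree_C, mul_zero] at this
          omega
        omega
    _ ≤ e - 1 := by simp at hj; omega

lemma deg_shift_sub_mono (h : Fin n → R) (m : Fin n →₀ ℕ) (c : R) (d : ℕ)
    (hm : (m.sum fun _ e => e) ≤ d + 1) :
    ((bind₁ (fun i => X i + C (h i)) (monomial m c)) - monomial m c).totalDegree ≤ d := by
  classical
  choose E hE hEdeg using fun i : Fin n => pow_X_add_C i (h i) (m i)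
  rw [bind₁_monomial, monomial_eq]
  have hprod : (∏ i ∈ m.support, (X i + C (h i)) ^ m i)
      = ∑ t ∈ m.support.powerset, (∏ i ∈ t, X i ^ m i) * ∏ i ∈ m.support \ t, E i := by
    rw [← Finset.prod_add]
    exact Finset.prod_congr rfl fun i _ => hE i
  have hsplit : ∑ t ∈ m.support.powerset, (∏ i ∈ t, X i ^ m i) * ∏ i ∈ m.support \ t, E i
      = (∏ i ∈ m.support, X i ^ m i)
        + ∑ t ∈ m.support.powerset.erase m.support,
            (∏ i ∈ t, X i ^ m i) * ∏ i ∈ m.support \ t, E i := by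
    have hins : m.support.powerset = insert m.support (m.support.powerset.erase m.support) :=
      (Finset.insert_erase (Finset.mem_powerset_self _)).symm
    rw [hins, Finset.sum_insert (Finset.notMem_erase _ _)]
    simp
  have hfp : (Finsupp.prod m fun i e => (X i : MvPolynomial (Fin n) R) ^ e)
      = ∏ i ∈ m.support, (X i : MvPolynomial (Fin n) R) ^ m i := rfl
  rw [hprod, hsplit, hfp]
  have : C c * ((∏ i ∈ m.support, X i ^ m i)
        + ∑ t ∈ m.support.powerset.erase m.support,
            (∏ i ∈ t, X i ^ m i) * ∏ i ∈ m.support \ t, E i)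
      - C c * ∏ i ∈ m.support, X i ^ m i
      = C c * ∑ t ∈ m.support.powerset.erase m.support,
            (∏ i ∈ t, X i ^ m i) * ∏ i ∈ m.support \ t, E i := by ring
  rw [this]
  refine (totalDegree_mul _ _).trans ?_
  rw [totalDegree_C, zero_add]
  refine (totalDegree_finset_sum _ _).trans (Finset.sup_le ?_)
  intro t ht
  have hts : t ⊆ m.support := Finset.mem_powerset.mp (Finset.mem_of_mem_erase ht)
  have htne : t ≠ m.support := Finset.ne_of_mem_erase ht
  have hnon : (m.support \ t).Nonempty := by
    rw [Finset.sdiff_nonempty]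
    intro hsub
    exact htne (Finset.Subset.antisymm hts hsub)
  refine (totalDegree_mul _ _).trans ?_
  have h1 : (∏ i ∈ t, (X i : MvPolynomial (Fin n) R) ^ m i).totalDegree ≤ ∑ i ∈ t, m i := by
    refine (totalDegree_finset_prod _ _).trans (Finset.sum_le_sum ?_)
    intro i _
    rw [X_pow_eq_monomial]
    exact (totalDegree_monomial_le _ _).trans (le_of_eq (Finsupp.sum_single_index rfl))
  have h2 : (∏ i ∈ m.support \ t, E i).totalDegree ≤ ∑ i ∈ m.support \ t, (m i - 1) := by
    exact (totalDegree_finset_prod _ _).trans (Finset.sum_le_sum fun i _ => hEdeg i)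
  have h3 : ∑ i ∈ t, m i + ∑ i ∈ m.support \ t, m i = m.sum fun _ e => e := by
    rw [Finsupp.sum, ← Finset.sum_union (Finset.disjoint_sdiff)]
    rw [Finset.union_sdiff_of_subset hts]
  have h4 : ∑ i ∈ m.support \ t, (m i - 1) + 1 ≤ ∑ i ∈ m.support \ t, m i := by
    have hcard : 1 ≤ (m.support \ t).card := Finset.card_pos.mpr hnon
    have heq : ∑ i ∈ m.support \ t, m i = ∑ i ∈ m.support \ t, ((m i - 1) + 1) := by
      refine Finset.sum_congr rfl fun i hi => ?_
      have := Finsupp.mem_support_iff.mp (Finset.mem_sdiff.mp hi).1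
      omega
    rw [heq, Finset.sum_add_distrib, Finset.sum_const, smul_eq_mul, mul_one]
    omega
  omega

lemma deg_shift_sub (h : Fin n → R) (P : MvPolynomial (Fin n) R) (d : ℕ)
    (hP : P.totalDegree ≤ d + 1) :
    ((bind₁ (fun i => X i + C (h i)) P) - P).totalDegree ≤ d := by
  classical
  conv_lhs => rw [P.as_sum]
  rw [map_sum, ← Finset.sum_sub_distrib]
  refine (totalDegree_finset_sum _ _).trans (Finset.sup_le ?_)
  intro m hm
  exact deg_shift_sub_mono h m _ d ((le_totalDegree hm).trans hP)

lemma eval_shift (h : Fin n → R) (P : MvPolynomial (Fin n) R) (x : Fin n → R) :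
    eval x (bind₁ (fun i => X i + C (h i)) P) = eval (x + h) P := by
  have e1 : ∀ (y : Fin n → R) (Q : MvPolynomial (Fin n) R), aeval y Q = eval y Q :=
    fun y Q => by rw [← coe_aeval_eq_eval]; rfl
  rw [← e1, ← e1, aeval_bind₁]
  have hfun : (fun i => aeval x (X i + C (h i))) = x + h := by
    funext i
    simp
  rw [hfun]

lemma isPolyDeg_deriv {d : ℕ} {f : (Fin n → R) → R} (hf : IsPolyDeg (d + 1) f)
    (h : Fin n → R) : IsPolyDeg d (fun x => f (x + h) - f x) := by
  obtain ⟨P, hPd, hPf⟩ := hf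
  exact ⟨bind₁ (fun i => X i + C (h i)) P - P, deg_shift_sub h P d hPd,
    fun x => by simp only []; rw [map_sub, eval_shift, hPf, hPf]⟩

lemma isPolyDeg_zero_deriv {f : (Fin n → R) → R} (hf : IsPolyDeg 0 f)
    (h x : Fin n → R) : f (x + h) = f x := by
  obtain ⟨P, hPd, hPf⟩ := hf
  have h0 : P.totalDegree = 0 := Nat.le_zero.mp hPd
  rw [hPf, hPf, eval_eq, eval_eq]
  refine Finset.sum_congr rfl fun m hm => ?_
  have := (totalDegree_eq_zero_iff _ P).mp h0 m hm
  have hsup : m.support = ∅ := Finsupp.support_eq_empty.mpr (Finsupp.ext fun i => this i)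
  rw [hsup]
  simp

end Deg

section Main

variable {p : ℕ} [Fact p.Prime] {n k : ℕ}

lemma zval_sub_one {c : ZMod p} (hc : c ≠ 0) : (c - 1).val + 1 = c.val := by
  haveI : NeZero p := ⟨(Fact.out (p := p.Prime)).ne_zero⟩
  have h1 : 0 < c.val := ZMod.val_pos.mpr hc
  have h2 : c.val < p := ZMod.val_lt c
  have h3 : ((c.val - 1 : ℕ) : ZMod p) = c - 1 := by
    rw [Nat.cast_sub h1, Nat.cast_one, ZMod.natCast_val, ZMod.cast_id]
  rw [← h3, ZMod.val_cast_of_lt (by omega)]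
  omega

lemma zval_add_one (c : ZMod p) : (c + 1).val ≤ c.val + 1 := by
  haveI : Fact (1 < p) := ⟨(Fact.out (p := p.Prime)).one_lt⟩
  calc (c + 1).val ≤ c.val + (1 : ZMod p).val := ZMod.val_add_le _ _
    _ = c.val + 1 := by rw [ZMod.val_one]

lemma deriv_mem_span :
    ∀ (d : ℕ) (f : (Fin n → ZMod p) → ZMod p), IsPolyDeg d f →
    ∀ (z : Fin k → Fin n → ZMod p) (a : Fin k → ZMod p),
      (fun x => f (x + ∑ i, a i • z i) - f x) ∈ Submodule.span (ZMod p)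
        ((fun b : Fin k → ZMod p => fun x => f (x + ∑ i, b i • z i) - f x) ''
          {b | ∑ i, (b i).val ≤ d}) := by
  intro d
  induction d with
  | zero =>
    intro f hf z a
    have h0 : (fun x => f (x + ∑ i, a i • z i) - f x) = (0 : (Fin n → ZMod p) → ZMod p) := by
      funext x
      rw [isPolyDeg_zero_deriv hf]
      simp
    rw [h0]
    exact Submodule.zero_mem _
  | succ d ih =>
    intro f hf z
    haveI : Fact (1 < p) := ⟨(Fact.out (p := p.Prime)).one_lt⟩
    set g : (Fin k → ZMod p) → (Fin n → ZMod p) → ZMod p :=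
      fun b => fun x => f (x + ∑ i, b i • z i) - f x with hg
    suffices H : ∀ N : ℕ, ∀ a : Fin k → ZMod p, ∑ i, (a i).val ≤ N →
        g a ∈ Submodule.span (ZMod p) (g '' {b | ∑ i, (b i).val ≤ d + 1}) by
      intro a
      exact H _ a le_rfl
    intro N
    induction N with
    | zero =>
      intro a ha
      exact Submodule.subset_span ⟨a, by simp only [Set.mem_setOf_eq]; omega, rfl⟩
    | succ N ihN =>
      intro a ha
      by_cases hsmall : ∑ i, (a i).val ≤ d + 1
      · exact Submodule.subset_span ⟨a, hsmall, rfl⟩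
      · have hex : ∃ i, a i ≠ 0 := by
          by_contra hno
          push_neg at hno
          have : ∑ i, (a i).val = 0 := Finset.sum_eq_zero fun i _ => by
            rw [hno i, ZMod.val_zero]
          omega
        obtain ⟨i0, hi0⟩ := hex
        set a' : Fin k → ZMod p := Function.update a i0 (a i0 - 1) with ha'
        set e0 : Fin k → ZMod p := Function.update (0 : Fin k → ZMod p) i0 1 with he0
        have split : ∀ (b : Fin k → ZMod p) (w : Fin k → Fin n → ZMod p),
            ∑ j, b j • w j = b i0 • w i0 + ∑ j ∈ Finset.univ.erase i0, b j • w j :=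
          fun b w => (Finset.add_sum_erase _ _ (Finset.mem_univ i0)).symm
        have vsplit : ∀ (b : Fin k → ZMod p),
            ∑ j, (b j).val = (b i0).val + ∑ j ∈ Finset.univ.erase i0, (b j).val :=
          fun b => (Finset.add_sum_erase _ _ (Finset.mem_univ i0)).symm
        have erase_a' : ∑ j ∈ Finset.univ.erase i0, a' j • z j
            = ∑ j ∈ Finset.univ.erase i0, a j • z j :=
          Finset.sum_congr rfl fun j hj => by
            rw [ha', Function.update_of_ne (Finset.ne_of_mem_erase hj)]
        have hsum_a : ∑ j, a j • z j = (∑ j, a' j • z j) + z i0 := by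
          rw [split a z, split a' z, erase_a', ha']
          rw [Function.update_self, sub_smul, one_smul]
          abel
        have hsum_e0 : ∑ j, e0 j • z j = z i0 := by
          rw [split e0 z, he0, Function.update_self, one_smul]
          have : ∑ j ∈ Finset.univ.erase i0, e0 j • z j = 0 := by
            refine Finset.sum_eq_zero fun j hj => ?_
            rw [he0, Function.update_of_ne (Finset.ne_of_mem_erase hj)]
            simp
          rw [he0] at this
          rw [this, add_zero]
        have hval_a' : ∑ j, (a' j).val ≤ N := by
          have h1 := vsplit a
          have h2 := vsplit a'
          have herase : ∑ j ∈ Finset.univ.erase i0, (a' j).val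
              = ∑ j ∈ Finset.univ.erase i0, (a j).val :=
            Finset.sum_congr rfl fun j hj => by
              rw [ha', Function.update_of_ne (Finset.ne_of_mem_erase hj)]
          have h3 : (a' i0).val + 1 = (a i0).val := by
            rw [ha', Function.update_self]
            exact zval_sub_one hi0
          omega
        have hval_e0 : ∑ j, (e0 j).val = 1 := by
          rw [vsplit e0, he0, Function.update_self, ZMod.val_one]
          have : ∑ j ∈ Finset.univ.erase i0, ((Function.update (0 : Fin k → ZMod p) i0 1) j).val = 0 :=
            Finset.sum_eq_zero fun j hj => by
              rw [Function.update_of_ne (Finset.ne_of_mem_erase hj)]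
              simp
          rw [this]
        -- the derivative of f in direction z i0
        set f' : (Fin n → ZMod p) → ZMod p := fun x => f (x + z i0) - f x with hf'
        have hf'deg : IsPolyDeg d f' := isPolyDeg_deriv hf (z i0)
        set g' : (Fin k → ZMod p) → (Fin n → ZMod p) → ZMod p :=
          fun b => fun x => f' (x + ∑ i, b i • z i) - f' x with hg'
        -- g' of any small b is in the span of g over small vectors
        have hspan' : Submodule.span (ZMod p) (g' '' {b | ∑ i, (b i).val ≤ d}) ≤
            Submodule.span (ZMod p) (g '' {b | ∑ i, (b i).val ≤ d + 1}) := by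
          rw [Submodule.span_le]
          rintro v ⟨b, hb, rfl⟩
          have hbe : ∑ j, ((b + e0) j).val ≤ d + 1 := by
            have h1 := vsplit (b + e0)
            have h2 := vsplit b
            have herase : ∑ j ∈ Finset.univ.erase i0, ((b + e0) j).val
                = ∑ j ∈ Finset.univ.erase i0, (b j).val :=
              Finset.sum_congr rfl fun j hj => by
                rw [Pi.add_apply, he0, Function.update_of_ne (Finset.ne_of_mem_erase hj)]
                simp
            have h3 : ((b + e0) i0).val ≤ (b i0).val + 1 := by
              rw [Pi.add_apply, he0, Function.update_self]
              exact zval_add_one _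
            have hb' : ∑ i, (b i).val ≤ d := hb
            omega
          have hsum_be : ∑ j, (b + e0) j • z j = (∑ j, b j • z j) + z i0 := by
            have : ∀ j, (b + e0) j • z j = b j • z j + e0 j • z j := fun j => by
              rw [Pi.add_apply, add_smul]
            rw [Finset.sum_congr rfl fun j _ => this j, Finset.sum_add_distrib, hsum_e0]
          have hid : g' b = g (b + e0) - g b - g e0 := by
            funext x
            simp only [hg, hg', hf', Pi.sub_apply]
            rw [hsum_be, hsum_e0]
            have hassoc : x + ((∑ j, b j • z j) + z i0) = x + (∑ j, b j • z j) + z i0 := by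
              rw [add_assoc]
            rw [hassoc]
            ring
          rw [hid]
          have m1 : g (b + e0) ∈ Submodule.span (ZMod p)
              (g '' {b | ∑ i, (b i).val ≤ d + 1}) := Submodule.subset_span ⟨b + e0, by simp only [Set.mem_setOf_eq]; omega, rfl⟩
          have m2 : g b ∈ Submodule.span (ZMod p)
              (g '' {b | ∑ i, (b i).val ≤ d + 1}) :=
            Submodule.subset_span ⟨b, by simp only [Set.mem_setOf_eq]; have : ∑ i, (b i).val ≤ d := hb; omega, rfl⟩
          have m3 : g e0 ∈ Submodule.span (ZMod p)
              (g '' {b | ∑ i, (b i).val ≤ d + 1}) :=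
            Submodule.subset_span ⟨e0, by simp only [Set.mem_setOf_eq]; omega, rfl⟩
          exact sub_mem (sub_mem m1 m2) m3
        -- decompose g a
        have hdecomp : g a = g' a' + g a' + g e0 := by
          funext x
          simp only [hg, hg', hf', Pi.add_apply]
          rw [hsum_a, hsum_e0]
          have hassoc : x + ((∑ j, a' j • z j) + z i0) = x + (∑ j, a' j • z j) + z i0 := by
            rw [add_assoc]
          rw [hassoc]
          ring
        rw [hdecomp]
        have m1 : g' a' ∈ Submodule.span (ZMod p) (g '' {b | ∑ i, (b i).val ≤ d + 1}) :=
          hspan' (ih f' hf'deg z a')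
        have m2 : g a' ∈ Submodule.span (ZMod p) (g '' {b | ∑ i, (b i).val ≤ d + 1}) :=
          ihN a' hval_a'
        have m3 : g e0 ∈ Submodule.span (ZMod p) (g '' {b | ∑ i, (b i).val ≤ d + 1}) :=
          Submodule.subset_span ⟨e0, by simp only [Set.mem_setOf_eq]; omega, rfl⟩
        exact add_mem (add_mem m1 m2) m3

end Main

/-- For a polynomial `f` of degree at most `d` over a prime field and fixed directions
`z_1, …, z_k`, every derivative `D_{a·z} f` is an `F`-linear combination of the derivatives
`D_{b·z} f` over `b ∈ B = {b ∈ F^k : Σ |b_i| ≤ d}`. -/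
theorem derivative_in_span_of_small_directions (p : ℕ) [Fact p.Prime] (n d k : ℕ)
    (f : (Fin n → ZMod p) → ZMod p) (hf : IsPolyDeg d f)
    (z : Fin k → Fin n → ZMod p) (a : Fin k → ZMod p) :
    ∃ lam : (Fin k → ZMod p) → ZMod p,
      ∀ x : Fin n → ZMod p,
        f (x + ∑ i, a i • z i) - f x =
          ∑ b ∈ Finset.univ.filter (fun b : Fin k → ZMod p => ∑ i, (b i).val ≤ d),
            lam b * (f (x + ∑ i, b i • z i) - f x) := by
  classical
  have hmem := deriv_mem_span d f hf z a
  rw [Finsupp.mem_span_image_iff_linearCombination] at hmem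
  obtain ⟨l, hl, hlc⟩ := hmem
  refine ⟨fun b => l b, fun x => ?_⟩
  have hsupp : l.support ⊆ Finset.univ.filter (fun b : Fin k → ZMod p => ∑ i, (b i).val ≤ d) := by
    intro b hb
    have := (Finsupp.mem_supported _ l).mp hl hb
    simp only [Set.mem_setOf_eq] at this
    exact Finset.mem_filter.mpr ⟨Finset.mem_univ _, this⟩
  have happ := congrFun hlc x
  rw [Finsupp.linearCombination_apply, Finsupp.sum] at happ
  have hsum : (∑ b ∈ l.support,
        l b • (fun y => f (y + ∑ i, b i • z i) - f y)) x
      = ∑ b ∈ l.support, l b * (f (x + ∑ i, b i • z i) - f x) := by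
    rw [Finset.sum_apply]
    rfl
  rw [hsum] at happ
  rw [← happ]
  refine Finset.sum_subset hsupp fun b _ hb => ?_
  rw [Finsupp.notMem_support_iff.mp hb, zero_mul]
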